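/- Let σ ∈ Σ_i. Then σ is a rationalizable strategy for player i in Γ if and only if there exist a probability structure M appropriate for Γ and a state ω of M such that strat_i(ω) = σ and, for every k ≥ 0, (M,ω) ⊨ B_i(E^k(RAT)), where RAT = ∩_{j=1}^n RAT_j, E(X) = ∩_{j=1}^n B_j X (with B_j X = {ω' : (M,ω') ⊨ B_j X}), E^0(X) = X, and E^{k+1}(X) = E(E^k(X)). Moreover, if σ is rationalizable, M can be taken to be finite with every subset of Ω measurable. -/

import Mathlib

open scoped BigOperators

noncomputable section

/-- A probability distribution on a finite type, represented as a weight function. -/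
def IsDist {α : Type*} [Fintype α] (p : α → ℝ) : Prop :=
  (∀ a, 0 ≤ p a) ∧ ∑ a, p a = 1

/-- The probability of a set under a weight function. -/
def probOf {α : Type*} [Fintype α] (p : α → ℝ) (E : Set α) : ℝ :=
  ∑ a, E.indicator p a

/-- A finite normal-form game with `n` players, all utilities in `[0,1]`. -/
structure Game (n : ℕ) where
  S : Fin n → Type
  fintypeS : ∀ i, Fintype (S i)
  decEqS : ∀ i, DecidableEq (S i)
  nonemptyS : ∀ i, Nonempty (S i)
  u : (i : Fin n) → ((j : Fin n) → S j) → ℝ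
  u_mem : ∀ i σ, u i σ ∈ Set.Icc (0 : ℝ) 1

attribute [instance] Game.fintypeS Game.decEqS Game.nonemptyS

namespace Game

variable {n : ℕ}

abbrev Prof (G : Game n) : Type := (j : Fin n) → G.S j

abbrev OppProf (G : Game n) (i : Fin n) : Type := (j : {j : Fin n // j ≠ i}) → G.S j.val

def stratOpp (G : Game n) (i : Fin n) (σ : G.Prof) : G.OppProf i := fun j => σ j.val

def combine (G : Game n) (i : Fin n) (s : G.S i) (τ : G.OppProf i) : G.Prof :=
  fun j => if h : j = i then cast (congrArg G.S h.symm) s else τ ⟨j, h⟩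

/-- Expected utility of strategy `s` of player `i` under belief `b` on opponents' profiles. -/
def EU (G : Game n) (i : Fin n) (s : G.S i) (b : G.OppProf i → ℝ) : ℝ :=
  ∑ τ : G.OppProf i, b τ * G.u i (G.combine i s τ)

/-- `s` is a best response to the belief `b`. -/
def BR (G : Game n) (i : Fin n) (s : G.S i) (b : G.OppProf i → ℝ) : Prop :=
  ∀ s' : G.S i, G.EU i s' b ≤ G.EU i s b

/-- Utility of mixed strategy `m` of player `i` against opponents' profile `τ`. -/
def EUmix (G : Game n) (i : Fin n) (m : G.S i → ℝ) (τ : G.OppProf i) : ℝ :=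
  ∑ s : G.S i, m s * G.u i (G.combine i s τ)

/-- `s` is weakly dominated by the mixed strategy `m` with respect to `T`. -/
def WDom (G : Game n) (i : Fin n) (m : G.S i → ℝ) (s : G.S i)
    (T : Set (G.OppProf i)) : Prop :=
  (∀ τ ∈ T, G.u i (G.combine i s τ) ≤ G.EUmix i m τ) ∧
    ∃ τ ∈ T, G.u i (G.combine i s τ) < G.EUmix i m τ

/-- `s` is strongly dominated by the mixed strategy `m` with respect to `T`. -/
def SDom (G : Game n) (i : Fin n) (m : G.S i → ℝ) (s : G.S i)
    (T : Set (G.OppProf i)) : Prop :=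
  ∀ τ ∈ T, G.u i (G.combine i s τ) < G.EUmix i m τ

/-- Strategies of player `i` surviving `k` rounds of iterated deletion of weakly
dominated strategies. -/
def NWD (G : Game n) : ℕ → (i : Fin n) → Set (G.S i)
  | 0 => fun _ => Set.univ
  | k + 1 => fun i =>
      {s | s ∈ NWD G k i ∧
        ¬∃ m : G.S i → ℝ, IsDist m ∧
          G.WDom i m s {τ : G.OppProf i | ∀ j, τ j ∈ NWD G k j.val}}

/-- Strategies of player `i` surviving `k` rounds of iterated deletion of strongly
dominated strategies. -/
def NSD (G : Game n) : ℕ → (i : Fin n) → Set (G.S i)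
  | 0 => fun _ => Set.univ
  | k + 1 => fun i =>
      {s | s ∈ NSD G k i ∧
        ¬∃ m : G.S i → ℝ, IsDist m ∧
          G.SDom i m s {τ : G.OppProf i | ∀ j, τ j ∈ NSD G k j.val}}

end Game

open MeasureTheory in
/-- A probability structure appropriate for the game `G`. -/
structure PStruct {n : ℕ} (G : Game n) where
  Ω : Type
  meas : MeasurableSpace Ω
  strat : Ω → G.Prof
  PR : Fin n → Ω → @Measure Ω meas
  PR_prob : ∀ i ω, @IsProbabilityMeasure Ω meas (PR i ω)
  strat_meas : ∀ (j : Fin n) (s : G.S j), MeasurableSet[meas] {ω | strat ω j = s}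
  PR_own_strat : ∀ i ω, PR i ω {ω' | strat ω' i = strat ω i} = 1
  PR_meas : ∀ (i : Fin n) (π : @Measure Ω meas), MeasurableSet[meas] {ω | PR i ω = π}
  PR_own_PR : ∀ i ω, PR i ω {ω' | PR i ω' = PR i ω} = 1

namespace PStruct

variable {n : ℕ} {G : Game n}

/-- The belief on opponents' strategy profiles induced by `PR i ω`. -/
def belief (M : PStruct G) (i : Fin n) (ω : M.Ω) : G.OppProf i → ℝ :=
  fun τ => (M.PR i ω {ω' | G.stratOpp i (M.strat ω') = τ}).toReal

/-- `(M,ω) ⊨ RAT_i`. -/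
def RATi (M : PStruct G) (i : Fin n) (ω : M.Ω) : Prop :=
  G.BR i (M.strat ω i) (M.belief i ω)

/-- `(M,ω) ⊨ B_i E`. -/
def Bel (M : PStruct G) (i : Fin n) (ω : M.Ω) (E : Set M.Ω) : Prop :=
  ∃ F, @MeasurableSet M.Ω M.meas F ∧ F ⊆ E ∧ M.PR i ω F = 1

/-- `(M,ω) ⊨ ⟨B_i⟩ E`. -/
def BelPos (M : PStruct G) (i : Fin n) (ω : M.Ω) (E : Set M.Ω) : Prop :=
  ∃ F, @MeasurableSet M.Ω M.meas F ∧ F ⊆ E ∧ 0 < M.PR i ω F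

end PStruct

/-- The events `RATzero^k_i(M)`, defined simultaneously for all appropriate structures. -/
def RATzero {n : ℕ} (G : Game n) : (k : ℕ) → (M : PStruct G) → Fin n → Set M.Ω
  | 0, _, _ => Set.univ
  | k + 1, M, i =>
      {ω | M.RATi i ω ∧
        M.Bel i ω {ω' | ∃ M' : PStruct G, ∃ ω'' : M'.Ω,
          M'.strat ω'' i = M.strat ω' i ∧ ω'' ∈ RATzero G k M' i} ∧
        M.Bel i ω {ω' | ∀ j, j ≠ i → ω' ∈ RATzero G k M j} ∧
        ∀ j, j ≠ i → ∀ s : G.S j,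
          (∃ M' : PStruct G, ∃ ω' : M'.Ω, M'.strat ω' j = s ∧
              ∀ j', j' ≠ i → ω' ∈ RATzero G k M' j') →
            M.BelPos i ω {ω'' | M.strat ω'' j = s}}

/-- The events `RAT^k_i(M)`. -/
def RATk {n : ℕ} (G : Game n) (M : PStruct G) : (k : ℕ) → Fin n → Set M.Ω
  | 0, _ => Set.univ
  | k + 1, i => {ω | M.RATi i ω ∧ M.Bel i ω {ω' | ∀ j, j ≠ i → ω' ∈ RATk G M k j}}

/-- The event that every player is rational. -/
def RATall {n : ℕ} {G : Game n} (M : PStruct G) : Set M.Ω := {ω | ∀ j, M.RATi j ω}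

/-- The "everyone believes" operator iterated `k` times. -/
def Ek {n : ℕ} {G : Game n} (M : PStruct G) : ℕ → Set M.Ω → Set M.Ω
  | 0, X => X
  | k + 1, X => {ω | ∀ j, M.Bel j ω (Ek M k X)}

/-- `σ` is a rationalizable strategy for player `i`. -/
def Rationalizable {n : ℕ} (G : Game n) (i : Fin n) (σ : G.S i) : Prop :=
  ∃ Z : (j : Fin n) → Set (G.S j),
    σ ∈ Z i ∧
    ∀ j, ∀ σ' ∈ Z j, ∃ μ : G.OppProf j → ℝ, IsDist μ ∧
      (∀ τ, 0 < μ τ → ∀ j', τ j' ∈ Z j'.val) ∧ G.BR j σ' μ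

/-- `σ` is rationalizable′ for player `i`. -/
def Rationalizable' {n : ℕ} (G : Game n) (i : Fin n) (σ : G.S i) : Prop :=
  ∃ X : ℕ → (j : Fin n) → Set (G.S j),
    (∀ j, X 0 j = Set.univ) ∧
    (∀ (k : ℕ) (j : Fin n), ∀ σ' ∈ X (k + 1) j, ∃ μ : G.OppProf j → ℝ, IsDist μ ∧
      (∀ τ, 0 < μ τ → ∀ j', τ j' ∈ X k j'.val) ∧ G.BR j σ' μ) ∧
    ∀ k, σ ∈ X k i

end
noncomputable section MW
open MeasureTheory

noncomputable def mw {α : Type} [Fintype α] (p : α → ℝ) : @Measure α ⊤ :=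
  ∑ a : α, ENNReal.ofReal (p a) • @Measure.dirac α ⊤ a

lemma mw_apply {α : Type} [Fintype α] (p : α → ℝ) (E : Set α) :
    mw p E = ∑ a : α, ENNReal.ofReal (E.indicator p a) := by
  calc (mw p) E = (∑ a : α, ⇑(ENNReal.ofReal (p a) • @Measure.dirac α ⊤ a)) E := by
        rw [mw, Measure.coe_finset_sum]
    _ = ∑ a : α, ENNReal.ofReal (p a) * (@Measure.dirac α ⊤ a) E := by
        rw [Finset.sum_apply]; rfl
    _ = ∑ a : α, ENNReal.ofReal (E.indicator p a) := by
        refine Finset.sum_congr rfl fun a _ => ?_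
        rw [@Measure.dirac_apply' α ⊤ E a MeasurableSpace.measurableSet_top]
        by_cases h : a ∈ E
        · rw [Set.indicator_of_mem h, Set.indicator_of_mem h, Pi.one_apply, mul_one]
        · rw [Set.indicator_of_notMem h, Set.indicator_of_notMem h, mul_zero,
            ENNReal.ofReal_zero]

lemma mw_eq_one {α : Type} [Fintype α] {p : α → ℝ} (hp : IsDist p) {E : Set α}
    (h : ∀ a, a ∉ E → p a = 0) : mw p E = 1 := by
  rw [mw_apply]
  have heq : ∀ a : α, E.indicator p a = p a := by
    intro a
    by_cases ha : a ∈ E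
    · exact Set.indicator_of_mem ha p
    · rw [Set.indicator_of_notMem ha, h a ha]
  calc ∑ a : α, ENNReal.ofReal (E.indicator p a) = ∑ a : α, ENNReal.ofReal (p a) := by
        exact Finset.sum_congr rfl fun a _ => by rw [heq]
    _ = ENNReal.ofReal (∑ a : α, p a) := (ENNReal.ofReal_sum_of_nonneg fun a _ => hp.1 a).symm
    _ = 1 := by rw [hp.2, ENNReal.ofReal_one]

lemma mw_univ {α : Type} [Fintype α] {p : α → ℝ} (hp : IsDist p) : mw p Set.univ = 1 :=
  mw_eq_one hp fun a ha => (ha (Set.mem_univ a)).elim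

lemma mw_toReal {α : Type} [Fintype α] {p : α → ℝ} (hp : ∀ a, 0 ≤ p a) (E : Set α) :
    (mw p E).toReal = ∑ a : α, E.indicator p a := by
  rw [mw_apply, ← ENNReal.ofReal_sum_of_nonneg
    (fun a _ => Set.indicator_apply_nonneg fun _ => hp a),
    ENNReal.toReal_ofReal (Finset.sum_nonneg fun a _ =>
      Set.indicator_apply_nonneg fun _ => hp a)]
end MW
noncomputable section Auxiliary
open MeasureTheory

namespace GameAux

variable {n : ℕ} {G : Game n}

lemma combine_apply_self (i : Fin n) (s : G.S i) (τ : G.OppProf i) :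
    G.combine i s τ i = s := by
  simp [Game.combine]

lemma combine_apply_ne (i : Fin n) (s : G.S i) (τ : G.OppProf i) {j : Fin n} (h : j ≠ i) :
    G.combine i s τ j = τ ⟨j, h⟩ := dif_neg h

lemma stratOpp_combine (i : Fin n) (s : G.S i) (τ : G.OppProf i) :
    G.stratOpp i (G.combine i s τ) = τ := by
  funext j
  show G.combine i s τ j.val = τ j
  rw [combine_apply_ne i s τ j.2]

lemma eq_combine {i : Fin n} {ρ : G.Prof} {s : G.S i} {τ : G.OppProf i}
    (h1 : ρ i = s) (h2 : G.stratOpp i ρ = τ) : ρ = G.combine i s τ := by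
  funext j
  by_cases h : j = i
  · subst h
    rw [combine_apply_self, h1]
  · rw [combine_apply_ne i s τ h, ← h2]
    rfl

def profEquiv (G : Game n) (i : Fin n) : G.Prof ≃ G.S i × G.OppProf i where
  toFun ρ := (ρ i, G.stratOpp i ρ)
  invFun p := G.combine i p.1 p.2
  left_inv ρ := (eq_combine rfl rfl).symm
  right_inv p := Prod.ext (combine_apply_self i p.1 p.2) (stratOpp_combine i p.1 p.2)

lemma sum_prof (j : Fin n) (f : G.Prof → ℝ) :
    ∑ ρ : G.Prof, f ρ = ∑ s : G.S j, ∑ τ : G.OppProf j, f (G.combine j s τ) := by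
  have h1 : ∑ ρ : G.Prof, f ρ = ∑ p : G.S j × G.OppProf j, f (G.combine j p.1 p.2) :=
    (Fintype.sum_equiv (profEquiv G j).symm _ _ fun p => rfl).symm
  rw [h1, Fintype.sum_prod_type]

lemma exists_pos_of_isDist {α : Type} [Fintype α] {p : α → ℝ} (hp : IsDist p) :
    ∃ a, 0 < p a := by
  by_contra h
  push_neg at h
  have : ∑ a : α, p a = 0 := Finset.sum_eq_zero fun a _ => le_antisymm (h a) (hp.1 a)
  rw [hp.2] at this
  norm_num at this

end GameAux
end Auxiliary
noncomputable section Constructions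
open MeasureTheory
namespace GameAux

variable {n : ℕ} {G : Game n}

/-- Weight function on full profiles induced by a belief of player `j` playing `s`. -/
def wgtOf (G : Game n) (j : Fin n) (s : G.S j) (b : G.OppProf j → ℝ) (ρ' : G.Prof) : ℝ :=
  if ρ' j = s then b (G.stratOpp j ρ') else 0

lemma wgtOf_eq_zero {j : Fin n} {s : G.S j} {b : G.OppProf j → ℝ} {ρ' : G.Prof}
    (h : ¬ ρ' j = s) : wgtOf G j s b ρ' = 0 := if_neg h

lemma wgtOf_nonneg {j : Fin n} {s : G.S j} {b : G.OppProf j → ℝ} (hb : ∀ τ, 0 ≤ b τ)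
    (ρ' : G.Prof) : 0 ≤ wgtOf G j s b ρ' := by
  unfold wgtOf; split_ifs with h
  · exact hb _
  · exact le_refl 0

lemma wgtOf_combine (j : Fin n) (s : G.S j) (b : G.OppProf j → ℝ) (s' : G.S j)
    (τ : G.OppProf j) : wgtOf G j s b (G.combine j s' τ) = if s' = s then b τ else 0 := by
  unfold wgtOf
  rw [combine_apply_self, stratOpp_combine]

lemma wgtOf_sum (j : Fin n) (s : G.S j) {b : G.OppProf j → ℝ} (hb : ∑ τ, b τ = 1) :
    ∑ ρ' : G.Prof, wgtOf G j s b ρ' = 1 := by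
  rw [sum_prof j]
  have h1 : ∀ s' : G.S j, ∑ τ : G.OppProf j, wgtOf G j s b (G.combine j s' τ)
      = if s' = s then 1 else 0 := by
    intro s'
    split_ifs with h
    · subst h
      rw [← hb]
      exact Finset.sum_congr rfl fun τ _ => by rw [wgtOf_combine, if_pos rfl]
    · exact Finset.sum_eq_zero fun τ _ => by rw [wgtOf_combine, if_neg h]
  rw [Finset.sum_congr rfl fun s' _ => h1 s']
  simp

lemma wgtOf_isDist (j : Fin n) (s : G.S j) {b : G.OppProf j → ℝ} (hb : IsDist b) :
    IsDist (wgtOf G j s b) :=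
  ⟨wgtOf_nonneg hb.1, wgtOf_sum j s hb.2⟩

lemma wgtOf_indicator_sum (j : Fin n) (s : G.S j) (b : G.OppProf j → ℝ) (τ₀ : G.OppProf j) :
    ∑ ρ' : G.Prof, ({ρ'' : G.Prof | G.stratOpp j ρ'' = τ₀}).indicator (wgtOf G j s b) ρ'
      = b τ₀ := by
  classical
  rw [sum_prof j]
  have h1 : ∀ (s' : G.S j) (τ : G.OppProf j),
      ({ρ'' : G.Prof | G.stratOpp j ρ'' = τ₀}).indicator (wgtOf G j s b) (G.combine j s' τ)
        = if τ = τ₀ then (if s' = s then b τ₀ else 0) else 0 := by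
    intro s' τ
    by_cases hτ : τ = τ₀
    · rw [if_pos hτ, Set.indicator_of_mem (by rw [Set.mem_setOf_eq, stratOpp_combine]; exact hτ),
        wgtOf_combine, hτ]
    · rw [if_neg hτ, Set.indicator_of_notMem
        (by rw [Set.mem_setOf_eq, stratOpp_combine]; exact hτ)]
  have h2 : ∀ s' : G.S j, ∑ τ : G.OppProf j,
      ({ρ'' : G.Prof | G.stratOpp j ρ'' = τ₀}).indicator (wgtOf G j s b) (G.combine j s' τ)
        = if s' = s then b τ₀ else 0 := by
    intro s'
    rw [Finset.sum_congr rfl fun τ _ => h1 s' τ]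
    simp
  rw [Finset.sum_congr rfl fun s' _ => h2 s']
  simp

end GameAux
end Constructions
noncomputable section Forward
open MeasureTheory
namespace GameAux

lemma forward_struct {n : ℕ} (G : Game n) (i : Fin n) (σ : G.S i)
    (h : Rationalizable G i σ) :
    ∃ (M : PStruct G) (ω : M.Ω), Finite M.Ω ∧ M.meas = ⊤ ∧ M.strat ω i = σ ∧
      ∀ k : ℕ, M.Bel i ω (Ek M k (RATall M)) := by
  classical
  obtain ⟨Z, hσZ, hZ⟩ := h
  -- choose a justifying belief for every strategy of every player
  have hch : ∀ (j : Fin n) (s : G.S j), ∃ μ : G.OppProf j → ℝ, IsDist μ ∧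
      (s ∈ Z j → (∀ τ, 0 < μ τ → ∀ j', τ j' ∈ Z j'.val) ∧ G.BR j s μ) := by
    intro j s
    by_cases hs : s ∈ Z j
    · obtain ⟨μ, h1, h2, h3⟩ := hZ j s hs
      exact ⟨μ, h1, fun _ => ⟨h2, h3⟩⟩
    · refine ⟨fun τ => if τ = Classical.arbitrary (G.OppProf j) then 1 else 0,
        ⟨fun τ => by dsimp only; split_ifs <;> norm_num, by simp⟩, fun hs' => absurd hs' hs⟩
  choose bel hbel1 hbel2 using hch
  -- the structure
  let M : PStruct G :=
    { Ω := G.Prof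
      meas := ⊤
      strat := id
      PR := fun j ρ => mw (wgtOf G j (ρ j) (bel j (ρ j)))
      PR_prob := fun j ρ => ⟨mw_univ (wgtOf_isDist j (ρ j) (hbel1 j (ρ j)))⟩
      strat_meas := fun _ _ => MeasurableSpace.measurableSet_top
      PR_own_strat := fun j ρ => mw_eq_one (wgtOf_isDist j (ρ j) (hbel1 j (ρ j)))
        (fun ρ' hρ' => wgtOf_eq_zero hρ')
      PR_meas := fun _ _ => MeasurableSpace.measurableSet_top
      PR_own_PR := fun j ρ => mw_eq_one (wgtOf_isDist j (ρ j) (hbel1 j (ρ j)))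
        (fun ρ' hρ' => wgtOf_eq_zero fun hEq => hρ'
          (congrArg (fun s => mw (wgtOf G j s (bel j s))) hEq)) }
  -- the belief of the structure is the chosen belief
  have hbelief : ∀ (j : Fin n) (ρ : G.Prof) (τ₀ : G.OppProf j),
      M.belief j ρ τ₀ = bel j (ρ j) τ₀ := by
    intro j ρ τ₀
    show (mw (wgtOf G j (ρ j) (bel j (ρ j))) {ρ' : G.Prof | G.stratOpp j ρ' = τ₀}).toReal = _
    rw [mw_toReal (wgtOf_nonneg (hbel1 j (ρ j)).1), wgtOf_indicator_sum]
  -- the event that everyone plays in Z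
  let E : Set G.Prof := {ρ | ∀ j, ρ j ∈ Z j}
  have hPRE : ∀ (j : Fin n) (ρ : G.Prof), ρ j ∈ Z j →
      mw (wgtOf G j (ρ j) (bel j (ρ j))) E = 1 := by
    intro j ρ hs
    refine mw_eq_one (wgtOf_isDist j (ρ j) (hbel1 j (ρ j))) fun ρ' hρ' => ?_
    by_cases hc : ρ' j = ρ j
    · by_contra hne
      have hpos : 0 < bel j (ρ j) (G.stratOpp j ρ') := by
        rcases lt_or_eq_of_le ((hbel1 j (ρ j)).1 (G.stratOpp j ρ')) with h' | h'
        · exact h'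
        · exact absurd (by rw [wgtOf, if_pos hc, ← h']) hne
      have hsupp := (hbel2 j (ρ j) hs).1 (G.stratOpp j ρ') hpos
      apply hρ'
      intro j''
      by_cases hj : j'' = j
      · subst hj; rw [hc]; exact hs
      · exact hsupp ⟨j'', hj⟩
    · exact wgtOf_eq_zero hc
  -- everyone playing in Z implies rationality
  have hRAT : ∀ (ρ : G.Prof) (j : Fin n), ρ j ∈ Z j → M.RATi j ρ := by
    intro ρ j hρ
    show G.BR j (ρ j) (M.belief j ρ)
    have : M.belief j ρ = bel j (ρ j) := funext fun τ₀ => hbelief j ρ τ₀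
    rw [this]
    exact (hbel2 j (ρ j) hρ).2
  -- E is contained in every iterated belief event
  have hEk : ∀ k : ℕ, E ⊆ Ek M k (RATall M) := by
    intro k
    induction k with
    | zero => exact fun ρ hρ j => hRAT ρ j (hρ j)
    | succ k ih =>
      intro ρ hρ j
      exact ⟨E, MeasurableSpace.measurableSet_top, ih, hPRE j ρ (hρ j)⟩
  -- the state
  obtain ⟨μσ, hμd, hμsupp, -⟩ := hZ i σ hσZ
  obtain ⟨τs, hτs⟩ := exists_pos_of_isDist hμd
  refine ⟨M, G.combine i σ τs, ?_, rfl, combine_apply_self i σ τs, ?_⟩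
  · exact inferInstanceAs (Finite G.Prof)
  · have hmem : G.combine i σ τs ∈ E := by
      intro j
      by_cases hj : j = i
      · subst hj; rw [combine_apply_self]; exact hσZ
      · rw [combine_apply_ne i σ τs hj]
        exact hμsupp τs hτs ⟨j, hj⟩
    intro k
    exact ⟨E, MeasurableSpace.measurableSet_top, hEk k,
      hPRE i (G.combine i σ τs) (by rw [combine_apply_self]; exact hσZ)⟩

end GameAux
end Forward
noncomputable section Backward
open MeasureTheory
namespace GameAux

variable {n : ℕ} {G : Game n}

def Dseq (M : PStruct G) : ℕ → Set M.Ω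
  | 0 => RATall M
  | k + 1 => Dseq M k ∩ Ek M (k + 1) (RATall M)

lemma Dseq_subset_RATall (M : PStruct G) : ∀ k, Dseq M k ⊆ RATall M
  | 0 => le_refl _
  | k + 1 => Set.inter_subset_left.trans (Dseq_subset_RATall M k)

lemma Dseq_antitone (M : PStruct G) : Antitone (Dseq M) :=
  antitone_nat_of_succ_le fun _ => Set.inter_subset_left

lemma Bel_inter {M : PStruct G} {j : Fin n} {ω : M.Ω} {A B : Set M.Ω}
    (hA : M.Bel j ω A) (hB : M.Bel j ω B) : M.Bel j ω (A ∩ B) := by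
  obtain ⟨F1, m1, s1, e1⟩ := hA
  obtain ⟨F2, m2, s2, e2⟩ := hB
  haveI := M.PR_prob j ω
  have h2c : M.PR j ω F2ᶜ = 0 := by
    rw [measure_compl m2 (measure_ne_top _ _), e2, measure_univ, tsub_self]
  have key : (1 : ENNReal) ≤ M.PR j ω (F1 ∩ F2) := by
    have hsub : F1 ⊆ (F1 ∩ F2) ∪ F2ᶜ := by
      intro x hx
      by_cases h : x ∈ F2
      · exact Or.inl ⟨hx, h⟩
      · exact Or.inr h
    calc (1 : ENNReal) = M.PR j ω F1 := e1.symm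
      _ ≤ M.PR j ω ((F1 ∩ F2) ∪ F2ᶜ) := measure_mono hsub
      _ ≤ M.PR j ω (F1 ∩ F2) + M.PR j ω F2ᶜ := measure_union_le _ _
      _ = M.PR j ω (F1 ∩ F2) := by rw [h2c, add_zero]
  exact ⟨F1 ∩ F2, m1.inter m2, Set.inter_subset_inter s1 s2, le_antisymm prob_le_one key⟩

lemma exists_state (M : PStruct G) (j : Fin n) (ω' : M.Ω) {D B : Set M.Ω}
    (hD : M.Bel j ω' D) (hBm : MeasurableSet[M.meas] B) (hpos : M.PR j ω' B ≠ 0) :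
    ∃ ω'', ω'' ∈ D ∧ ω'' ∈ B ∧ M.strat ω'' j = M.strat ω' j := by
  obtain ⟨F, hFm, hFD, hF1⟩ := hD
  haveI := M.PR_prob j ω'
  have hAm : MeasurableSet[M.meas] {ω'' | M.strat ω'' j = M.strat ω' j} :=
    M.strat_meas j (M.strat ω' j)
  have hA1 : M.PR j ω' {ω'' | M.strat ω'' j = M.strat ω' j} = 1 := M.PR_own_strat j ω'
  have hFc : M.PR j ω' Fᶜ = 0 := by
    rw [measure_compl hFm (measure_ne_top _ _), hF1, measure_univ, tsub_self]
  have hAc : M.PR j ω' {ω'' | M.strat ω'' j = M.strat ω' j}ᶜ = 0 := by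
    rw [measure_compl hAm (measure_ne_top _ _), hA1, measure_univ, tsub_self]
  have hkey : M.PR j ω' (B ∩ F ∩ {ω'' | M.strat ω'' j = M.strat ω' j}) ≠ 0 := by
    intro h0
    apply hpos
    have hsub : B ⊆ (B ∩ F ∩ {ω'' | M.strat ω'' j = M.strat ω' j}) ∪
        (Fᶜ ∪ {ω'' | M.strat ω'' j = M.strat ω' j}ᶜ) := by
      intro x hx
      by_cases hF : x ∈ F
      · by_cases hA : x ∈ {ω'' | M.strat ω'' j = M.strat ω' j}
        · exact Or.inl ⟨⟨hx, hF⟩, hA⟩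
        · exact Or.inr (Or.inr hA)
      · exact Or.inr (Or.inl hF)
    have := measure_mono (μ := M.PR j ω') hsub
    have hz : M.PR j ω' ((B ∩ F ∩ {ω'' | M.strat ω'' j = M.strat ω' j}) ∪
        (Fᶜ ∪ {ω'' | M.strat ω'' j = M.strat ω' j}ᶜ)) = 0 := by
      refine le_antisymm ?_ zero_le
      calc M.PR j ω' _ ≤ M.PR j ω' (B ∩ F ∩ {ω'' | M.strat ω'' j = M.strat ω' j}) +
            M.PR j ω' (Fᶜ ∪ {ω'' | M.strat ω'' j = M.strat ω' j}ᶜ) := measure_union_le _ _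
        _ ≤ 0 + (M.PR j ω' Fᶜ + M.PR j ω' {ω'' | M.strat ω'' j = M.strat ω' j}ᶜ) := by
            rw [h0]; exact add_le_add le_rfl (measure_union_le _ _)
        _ = 0 := by rw [hFc, hAc, add_zero, add_zero]
    exact le_antisymm (le_trans this hz.le) zero_le
  letI : MeasurableSpace M.Ω := M.meas
  obtain ⟨ω'', hmem⟩ := nonempty_of_measure_ne_zero hkey
  exact ⟨ω'', hFD hmem.1.2, hmem.1.1, hmem.2⟩

lemma oppSet_measurable (M : PStruct G) (j : Fin n) (τ : G.OppProf j) :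
    MeasurableSet[M.meas] {ω'' | G.stratOpp j (M.strat ω'') = τ} := by
  have heq : {ω'' | G.stratOpp j (M.strat ω'') = τ} =
      ⋂ j' : {j' : Fin n // j' ≠ j}, {ω'' | M.strat ω'' j'.val = τ j'} := by
    ext ω''
    simp only [Set.mem_setOf_eq, Set.mem_iInter, funext_iff]
    rfl
  rw [heq]
  exact MeasurableSet.iInter fun j' => M.strat_meas j'.val (τ j')

lemma belief_isDist (M : PStruct G) (j : Fin n) (ω' : M.Ω) : IsDist (M.belief j ω') := by
  haveI := M.PR_prob j ω'
  constructor
  · exact fun τ => ENNReal.toReal_nonneg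
  · have hdisj : Pairwise (Function.onFun Disjoint fun τ : G.OppProf j =>
        {ω'' | G.stratOpp j (M.strat ω'') = τ}) := by
      intro τ τ' hne
      refine Set.disjoint_left.mpr fun ω'' h1 h2 => hne ?_
      rw [← h1, ← h2]
    have huniv : ⋃ τ : G.OppProf j, {ω'' | G.stratOpp j (M.strat ω'') = τ} = Set.univ := by
      ext ω''
      simp only [Set.mem_iUnion, Set.mem_setOf_eq, Set.mem_univ, iff_true]
      exact ⟨G.stratOpp j (M.strat ω''), rfl⟩
    have hsum : ∑ τ : G.OppProf j, M.PR j ω' {ω'' | G.stratOpp j (M.strat ω'') = τ} = 1 := by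
      rw [← tsum_fintype (L := .unconditional _), ← measure_iUnion hdisj (fun τ => oppSet_measurable M j τ), huniv,
        measure_univ]
    have : ∑ τ : G.OppProf j, M.belief j ω' τ =
        (∑ τ : G.OppProf j, M.PR j ω' {ω'' | G.stratOpp j (M.strat ω'') = τ}).toReal := by
      rw [ENNReal.toReal_sum fun τ _ => measure_ne_top _ _]
      rfl
    rw [this, hsum, ENNReal.toReal_one]

lemma Bel_Dseq {M : PStruct G} : ∀ (k : ℕ) (ω' : M.Ω), ω' ∈ Dseq M (k + 1) →
    ∀ j, M.Bel j ω' (Dseq M k) := by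
  intro k
  induction k with
  | zero => exact fun ω' hω' j => hω'.2 j
  | succ k ih =>
    intro ω' hω' j
    exact Bel_inter (ih ω' hω'.1 j) (hω'.2 j)

lemma backward {n : ℕ} (G : Game n) (i : Fin n) (σ : G.S i) (M : PStruct G) (ω : M.Ω)
    (hσ : M.strat ω i = σ) (hb : ∀ k, M.Bel i ω (Ek M k (RATall M))) :
    Rationalizable G i σ := by
  classical
  haveI : ∀ j, ∀ ω', IsProbabilityMeasure (M.PR j ω') := fun j ω' => M.PR_prob j ω'
  have hBelD : ∀ k, M.Bel i ω (Dseq M k) := by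
    intro k
    induction k with
    | zero => exact hb 0
    | succ k ih => exact Bel_inter ih (hb (k + 1))
  set X : ℕ → (j : Fin n) → Set (G.S j) :=
    fun k j => {s | ∃ ω', M.strat ω' j = s ∧ ω' ∈ Dseq M k} with hXdef
  have hXanti : ∀ {k m : ℕ}, k ≤ m → ∀ j, X m j ⊆ X k j := by
    intro k m hkm j s hs
    obtain ⟨ω', h1, h2⟩ := hs
    exact ⟨ω', h1, Dseq_antitone M hkm h2⟩
  have hXσ : ∀ k, σ ∈ X k i := by
    intro k
    haveI := M.PR_prob i ω
    obtain ⟨ω'', hD, -, hs⟩ := exists_state M i ω (hBelD k) MeasurableSet.univ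
      (by rw [measure_univ]; exact one_ne_zero)
    exact ⟨ω'', by rw [hs, hσ], hD⟩
  have hXstep : ∀ (k : ℕ) (j : Fin n), ∀ s ∈ X (k + 1) j, ∃ μ : G.OppProf j → ℝ,
      IsDist μ ∧ (∀ τ, 0 < μ τ → ∀ j', τ j' ∈ X k j'.val) ∧ G.BR j s μ := by
    intro k j s hs
    obtain ⟨ω', hstrat, hD⟩ := hs
    refine ⟨M.belief j ω', belief_isDist M j ω', ?_, ?_⟩
    · intro τ hτ j'
      have hApos : M.PR j ω' {ω'' | G.stratOpp j (M.strat ω'') = τ} ≠ 0 := by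
        intro h0
        rw [PStruct.belief, h0] at hτ
        simp at hτ
      obtain ⟨ω'', hD', hA, -⟩ := exists_state M j ω' (Bel_Dseq k ω' hD j)
        (oppSet_measurable M j τ) hApos
      exact ⟨ω'', congrFun hA j', hD'⟩
    · have hR : M.RATi j ω' := Dseq_subset_RATall M (k + 1) hD j
      rw [← hstrat]
      exact hR
  -- stabilization
  haveI : Finite ((j : Fin n) → Set (G.S j)) := inferInstance
  obtain ⟨k, k', hne, heq⟩ := Finite.exists_ne_map_eq_of_infinite (fun k => X k)
  have key : ∀ k k' : ℕ, k < k' → X k = X k' → Rationalizable G i σ := by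
    intro k k' hlt heq
    refine ⟨X k, hXσ k, ?_⟩
    intro j s hs
    have hs' : s ∈ X (k + 1) j := by
      have h1 : X k j ⊆ X (k + 1) j := by
        rw [heq]
        exact hXanti hlt j
      exact h1 hs
    exact hXstep k j s hs'
  rcases lt_or_gt_of_ne hne with h | h
  · exact key k k' h heq
  · exact key k' k h heq.symm

end GameAux
end Backward
/-- epistemic characterization of rationalizability via common belief of
rationality; moreover the structure can be taken finite with every subset measurable. -/
theorem rationalizability_characterization {n : ℕ} (G : Game n) (i : Fin n) (σ : G.S i) :
    (Rationalizable G i σ ↔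
      ∃ (M : PStruct G) (ω : M.Ω), M.strat ω i = σ ∧
        ∀ k : ℕ, M.Bel i ω (Ek M k (RATall M))) ∧
    (Rationalizable G i σ →
      ∃ (M : PStruct G) (ω : M.Ω), Finite M.Ω ∧ M.meas = ⊤ ∧ M.strat ω i = σ ∧
        ∀ k : ℕ, M.Bel i ω (Ek M k (RATall M))) := by
  constructor
  · constructor
    · intro h
      obtain ⟨M, ω, -, -, h1, h2⟩ := GameAux.forward_struct G i σ h
      exact ⟨M, ω, h1, h2⟩
    · rintro ⟨M, ω, h1, h2⟩
      exact GameAux.backward G i σ M ω h1 h2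
  · exact GameAux.forward_struct G i σ
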